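/- (Theorem 2.4, a priori estimate.) Under the propagator setup and the solution setup, assume u₀ ≠ 0, let κ > 0, define ζ(t) := ‖U(t)‖·‖u₀‖ + ∫₀ᵗ ‖U(t)∘V(ξ)‖·β(ξ) dξ, and assume α(t)·((κ+1)·ζ(t))^p ≤ κ·β(t) for all t ≥ 0. Then ‖u(t)‖ < (κ+1)·ζ(t) for all t ∈ [0,T). -/

import Mathlib

open MeasureTheory Filter
open scoped ENNReal

theorem stmt9
    {X : Type*} [NormedAddCommGroup X] [NormedSpace ℝ X] [CompleteSpace X]
    (B U V : ℝ → X →L[ℝ] X)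
    (hB : Continuous B)
    (hU0 : U 0 = 1) (hV0 : V 0 = 1)
    (hVU : ∀ t, 0 ≤ t → (V t).comp (U t) = 1)
    (hUV : ∀ t, 0 ≤ t → (U t).comp (V t) = 1)
    (hUd : ∀ t, 0 ≤ t → HasDerivAt U ((B t).comp (U t)) t)
    (hVd : ∀ t, 0 ≤ t → HasDerivAt V (-((V t).comp (B t))) t)
    (p : ℝ) (hp : 1 < p)
    (α β : ℝ → ℝ) (hαc : Continuous α) (hβc : Continuous β)
    (hα0 : ∀ t, 0 ≤ α t) (hβ0 : ∀ t, 0 ≤ β t)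
    (T : ℝ≥0∞) (hT : 0 < T)
    (u G f : ℝ → X) (u₀ : X) (hu0 : u 0 = u₀)
    (hGc : ContinuousOn G {t : ℝ | 0 ≤ t ∧ ENNReal.ofReal t < T})
    (hfc : ContinuousOn f {t : ℝ | 0 ≤ t ∧ ENNReal.ofReal t < T})
    (hud : ∀ t, 0 ≤ t → ENNReal.ofReal t < T → HasDerivAt u (B t (u t) + G t + f t) t)
    (hGb : ∀ t, 0 ≤ t → ENNReal.ofReal t < T → ‖G t‖ ≤ α t * ‖u t‖ ^ p)
    (hfb : ∀ t, 0 ≤ t → ENNReal.ofReal t < T → ‖f t‖ ≤ β t)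
    (hu₀ : u₀ ≠ 0) (κ : ℝ) (hκ : 0 < κ)
    (ζ : ℝ → ℝ)
    (hζ : ∀ t, ζ t = ‖U t‖ * ‖u₀‖ + ∫ ξ in (0:ℝ)..t, ‖(U t).comp (V ξ)‖ * β ξ)
    (hκβ : ∀ t, 0 ≤ t → α t * ((κ + 1) * ζ t) ^ p ≤ κ * β t) :
    ∀ t, 0 ≤ t → ENNReal.ofReal t < T → ‖u t‖ < (κ + 1) * ζ t := by
  have : Nontrivial X := ⟨u₀, 0, hu₀⟩
  have hUc : ContinuousOn U (Set.Ici 0) :=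
    fun s hs => ((hUd s hs).continuousAt).continuousWithinAt
  have hVc : ContinuousOn V (Set.Ici 0) :=
    fun s hs => ((hVd s hs).continuousAt).continuousWithinAt
  have huc : ContinuousOn u {t : ℝ | 0 ≤ t ∧ ENNReal.ofReal t < T} :=
    fun s hs => ((hud s hs.1 hs.2).continuousAt).continuousWithinAt
  -- continuity of ζ on [0, ∞)
  have hζc : ContinuousOn ζ (Set.Ici 0) := by
    have hUm : Continuous fun s : ℝ => U (max s 0) :=
      hUc.comp_continuous (continuous_id.max continuous_const) (fun x => Set.mem_Ici.mpr (le_max_right _ _))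
    have hVm : Continuous fun s : ℝ => V (max s 0) :=
      hVc.comp_continuous (continuous_id.max continuous_const) (fun x => Set.mem_Ici.mpr (le_max_right _ _))
    have hF : Continuous
        (Function.uncurry fun s ξ : ℝ => ‖(U (max s 0)).comp (V (max ξ 0))‖ * β ξ) := by
      apply Continuous.mul
      · exact ((hUm.comp continuous_fst).clm_comp (hVm.comp continuous_snd)).norm
      · exact hβc.comp continuous_snd
    have h2 : Continuous fun s : ℝ =>
        ‖U (max s 0)‖ * ‖u₀‖ + ∫ ξ in (0:ℝ)..s, ‖(U (max s 0)).comp (V (max ξ 0))‖ * β ξ := by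
      apply Continuous.add
      · exact (hUm.norm).mul continuous_const
      · exact intervalIntegral.continuous_parametric_intervalIntegral_of_continuous hF
          continuous_id
    refine h2.continuousOn.congr fun s hs => ?_
    simp only [Set.mem_Ici] at hs
    rw [hζ s]; beta_reduce; rw [max_eq_left hs]
    congr 1
    refine intervalIntegral.integral_congr fun ξ hξ => ?_
    rw [Set.uIcc_of_le hs] at hξ
    rw [max_eq_left hξ.1]
  -- positivity of ‖U s‖ for s ≥ 0
  have hUpos : ∀ s, 0 ≤ s → 0 < ‖U s‖ := by
    intro s hs
    refine norm_pos_iff.mpr fun h0 => ?_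
    have h2 := ContinuousLinearMap.ext_iff.1 (hVU s hs) u₀
    rw [h0] at h2
    simp at h2
    exact hu₀ h2.symm
  -- key estimate
  have key : ∀ s, 0 ≤ s → ENNReal.ofReal s < T →
      (∀ ξ ∈ Set.Icc (0:ℝ) s, ‖u ξ‖ ≤ (κ + 1) * ζ ξ) → ‖u s‖ < (κ + 1) * ζ s := by
    intro s hs hsT hb
    have hsub : Set.Icc (0:ℝ) s ⊆ {t : ℝ | 0 ≤ t ∧ ENNReal.ofReal t < T} := by
      intro ξ hξ
      exact ⟨hξ.1, lt_of_le_of_lt (ENNReal.ofReal_le_ofReal hξ.2) hsT⟩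
    have hint : IntervalIntegrable (fun ξ => (V ξ) (G ξ + f ξ)) volume 0 s := by
      apply ContinuousOn.intervalIntegrable
      rw [Set.uIcc_of_le hs]
      exact (hVc.mono Set.Icc_subset_Ici_self).clm_apply
        (((hGc.mono hsub).add (hfc.mono hsub)))
    have hftc : (∫ ξ in (0:ℝ)..s, (V ξ) (G ξ + f ξ)) = V s (u s) - u₀ := by
      have := intervalIntegral.integral_eq_sub_of_hasDerivAt (f := fun τ => V τ (u τ))
        (f' := fun ξ => (V ξ) (G ξ + f ξ)) (a := 0) (b := s) ?_ hint
      · rw [this]; simp [hu0, hV0]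
      · intro ξ hξ
        rw [Set.uIcc_of_le hs] at hξ
        have hξT := (hsub hξ).2
        have h1 := (hVd ξ hξ.1).clm_apply (hud ξ hξ.1 hξT)
        convert h1 using 1
        simp [ContinuousLinearMap.comp_apply, map_add]
        abel
    have hVsu : V s (u s) = u₀ + ∫ ξ in (0:ℝ)..s, (V ξ) (G ξ + f ξ) := by
      rw [hftc]; abel
    have hid : U s (V s (u s)) = u s := by
      have h2 := ContinuousLinearMap.ext_iff.1 (hUV s hs) (u s)
      simpa using h2
    have hDuh : u s = U s u₀ + ∫ ξ in (0:ℝ)..s, ((U s).comp (V ξ)) (G ξ + f ξ) :=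
      calc u s = U s (V s (u s)) := hid.symm
        _ = U s (u₀ + ∫ ξ in (0:ℝ)..s, (V ξ) (G ξ + f ξ)) := by rw [hVsu]
        _ = U s u₀ + U s (∫ ξ in (0:ℝ)..s, (V ξ) (G ξ + f ξ)) := map_add _ _ _
        _ = U s u₀ + ∫ ξ in (0:ℝ)..s, U s ((V ξ) (G ξ + f ξ)) := by
            rw [(U s).intervalIntegral_comp_comm hint]
        _ = U s u₀ + ∫ ξ in (0:ℝ)..s, ((U s).comp (V ξ)) (G ξ + f ξ) := by
            simp [ContinuousLinearMap.comp_apply]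
    -- integrability of the norm integrands
    have hUVc : ContinuousOn (fun ξ => (U s).comp (V ξ)) (Set.Icc 0 s) :=
      (continuousOn_const.clm_comp (hVc.mono Set.Icc_subset_Ici_self))
    have hint1 : IntervalIntegrable
        (fun ξ => ‖((U s).comp (V ξ)) (G ξ + f ξ)‖) volume 0 s := by
      apply ContinuousOn.intervalIntegrable
      rw [Set.uIcc_of_le hs]
      exact (hUVc.clm_apply ((hGc.mono hsub).add (hfc.mono hsub))).norm
    have hint3 : IntervalIntegrable
        (fun ξ => ‖(U s).comp (V ξ)‖ * ((κ + 1) * β ξ)) volume 0 s := by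
      apply ContinuousOn.intervalIntegrable
      rw [Set.uIcc_of_le hs]
      exact hUVc.norm.mul (continuousOn_const.mul hβc.continuousOn)
    have hintβ : IntervalIntegrable
        (fun ξ => ‖(U s).comp (V ξ)‖ * β ξ) volume 0 s := by
      apply ContinuousOn.intervalIntegrable
      rw [Set.uIcc_of_le hs]
      exact hUVc.norm.mul hβc.continuousOn
    -- pointwise bound on the integrand
    have hpt : ∀ ξ ∈ Set.Icc (0:ℝ) s,
        ‖((U s).comp (V ξ)) (G ξ + f ξ)‖ ≤ ‖(U s).comp (V ξ)‖ * ((κ + 1) * β ξ) := by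
      intro ξ hξ
      have hξT := (hsub hξ).2
      have h1 : ‖((U s).comp (V ξ)) (G ξ + f ξ)‖ ≤ ‖(U s).comp (V ξ)‖ * ‖G ξ + f ξ‖ :=
        ContinuousLinearMap.le_opNorm _ _
      have h2 : ‖G ξ + f ξ‖ ≤ (κ + 1) * β ξ := by
        have hG := hGb ξ hξ.1 hξT
        have hf := hfb ξ hξ.1 hξT
        have hup : ‖u ξ‖ ^ p ≤ ((κ + 1) * ζ ξ) ^ p :=
          Real.rpow_le_rpow (norm_nonneg _) (hb ξ hξ) (le_of_lt (lt_trans one_pos hp))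
        have h3 : α ξ * ‖u ξ‖ ^ p ≤ α ξ * ((κ + 1) * ζ ξ) ^ p :=
          mul_le_mul_of_nonneg_left hup (hα0 ξ)
        have h4 := hκβ ξ hξ.1
        calc ‖G ξ + f ξ‖ ≤ ‖G ξ‖ + ‖f ξ‖ := norm_add_le _ _
          _ ≤ α ξ * ‖u ξ‖ ^ p + β ξ := add_le_add hG hf
          _ ≤ κ * β ξ + β ξ := add_le_add (le_trans h3 h4) le_rfl
          _ = (κ + 1) * β ξ := by ring
      calc ‖((U s).comp (V ξ)) (G ξ + f ξ)‖ ≤ ‖(U s).comp (V ξ)‖ * ‖G ξ + f ξ‖ := h1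
        _ ≤ ‖(U s).comp (V ξ)‖ * ((κ + 1) * β ξ) :=
            mul_le_mul_of_nonneg_left h2 (norm_nonneg _)
    -- integral estimate
    have hest : ‖u s‖ ≤ ‖U s‖ * ‖u₀‖ +
        ∫ ξ in (0:ℝ)..s, ‖(U s).comp (V ξ)‖ * ((κ + 1) * β ξ) := by
      rw [hDuh]
      refine le_trans (norm_add_le _ _) (add_le_add ?_ ?_)
      · exact ContinuousLinearMap.le_opNorm _ _
      · refine le_trans (intervalIntegral.norm_integral_le_integral_norm hs) ?_
        exact intervalIntegral.integral_mono_on hs hint1 hint3 hpt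
    have heq : (∫ ξ in (0:ℝ)..s, ‖(U s).comp (V ξ)‖ * ((κ + 1) * β ξ))
        = (κ + 1) * ∫ ξ in (0:ℝ)..s, ‖(U s).comp (V ξ)‖ * β ξ := by
      rw [← intervalIntegral.integral_const_mul]
      refine intervalIntegral.integral_congr fun ξ _ => ?_
      ring
    have hζs : (∫ ξ in (0:ℝ)..s, ‖(U s).comp (V ξ)‖ * β ξ) = ζ s - ‖U s‖ * ‖u₀‖ := by
      rw [hζ s]; ring
    have hUn : 0 < ‖U s‖ * ‖u₀‖ :=
      mul_pos (hUpos s hs) (norm_pos_iff.mpr hu₀)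
    rw [heq, hζs] at hest
    nlinarith [hest, hUn, hκ]
  -- continuity / infimum argument
  intro t ht htT
  by_contra hcon
  push_neg at hcon
  have hsubt : Set.Icc (0:ℝ) t ⊆ {s : ℝ | 0 ≤ s ∧ ENNReal.ofReal s < T} := by
    intro ξ hξ
    exact ⟨hξ.1, lt_of_le_of_lt (ENNReal.ofReal_le_ofReal hξ.2) htT⟩
  set g : ℝ → ℝ := fun s => (κ + 1) * ζ s - ‖u s‖ with hg
  have hgc : ContinuousOn g (Set.Icc 0 t) := by
    apply ContinuousOn.sub
    · exact continuousOn_const.mul (hζc.mono (Set.Icc_subset_Ici_self))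
    · exact (huc.mono hsubt).norm
  set A : Set ℝ := {s ∈ Set.Icc (0:ℝ) t | g s ≤ 0} with hA
  have htA : t ∈ A := ⟨Set.right_mem_Icc.mpr ht, by simp [hg]; linarith⟩
  have hAcl : IsClosed A := by
    exact hgc.preimage_isClosed_of_isClosed isClosed_Icc (isClosed_Iic (a := (0:ℝ)))
  have hAcp : IsCompact A :=
    isCompact_Icc.of_isClosed_subset hAcl (fun x hx => hx.1)
  have hAne : A.Nonempty := ⟨t, htA⟩
  set t₀ := sInf A with ht₀
  have ht₀A : t₀ ∈ A := hAcp.sInf_mem hAne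
  have ht₀Icc : t₀ ∈ Set.Icc (0:ℝ) t := ht₀A.1
  have ht₀T : ENNReal.ofReal t₀ < T := (hsubt ht₀Icc).2
  have hless : ∀ ξ, 0 ≤ ξ → ξ < t₀ → ‖u ξ‖ < (κ + 1) * ζ ξ := by
    intro ξ hξ0 hξlt
    by_contra hc
    push_neg at hc
    have hξA : ξ ∈ A := ⟨⟨hξ0, le_trans (le_of_lt hξlt) ht₀Icc.2⟩, by simp [hg]; linarith⟩
    exact absurd (csInf_le ⟨0, fun x hx => hx.1.1⟩ hξA) (not_le.mpr hξlt)
  -- t₀ = 0 gives an immediate contradiction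
  rcases eq_or_lt_of_le ht₀Icc.1 with h0 | h0
  · have hζ0 : ζ 0 = ‖u₀‖ := by
      rw [hζ 0]
      simp [hU0, ContinuousLinearMap.norm_id]
    have hA2 := ht₀A.2
    rw [← h0] at hA2
    simp only [hg] at hA2
    rw [hζ0, hu0] at hA2
    nlinarith [norm_pos_iff.mpr hu₀]
  · have hle_t₀ : ‖u t₀‖ ≤ (κ + 1) * ζ t₀ := by
      have hcw : ContinuousWithinAt g (Set.Ico 0 t₀) t₀ :=
        (hgc t₀ ht₀Icc).mono (fun x hx => ⟨hx.1, le_trans hx.2.le ht₀Icc.2⟩)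
      have hne : (nhdsWithin t₀ (Set.Ico (0:ℝ) t₀)).NeBot := by
        rw [← mem_closure_iff_nhdsWithin_neBot, closure_Ico (ne_of_lt h0)]
        exact ⟨ht₀Icc.1, le_refl _⟩
      have hev : ∀ᶠ x in nhdsWithin t₀ (Set.Ico (0:ℝ) t₀), 0 ≤ g x := by
        filter_upwards [self_mem_nhdsWithin] with x hx
        have := hless x hx.1 hx.2
        simp only [hg]
        linarith
      have h0g : 0 ≤ g t₀ := ge_of_tendsto hcw hev
      simp only [hg] at h0g
      linarith
    have hle : ∀ ξ ∈ Set.Icc (0:ℝ) t₀, ‖u ξ‖ ≤ (κ + 1) * ζ ξ := by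
      intro ξ hξ
      rcases lt_or_eq_of_le hξ.2 with hlt | heq
      · exact (hless ξ hξ.1 hlt).le
      · rw [heq]; exact hle_t₀
    have hstrict := key t₀ ht₀Icc.1 ht₀T hle
    have hA2 := ht₀A.2
    simp only [hg] at hA2
    linarith
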